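/- Let ψ∈Nₙ, α∈Pₙ, γ∈Pₙ₊₁. If ¬⟨γ=↓[ψ]α⟩∧¬⟨γ≠↓[ψ]α⟩∧⟨γ⟩∧⟨↓[ψ]⟩ is XP-consistent, then ¬⟨α=α⟩ is a conjunct of ψ. -/

import Mathlib

attribute [local instance] Classical.propDecidable

mutual
inductive PathExpr (A : Type) : Type
  | eps : PathExpr A
  | down : PathExpr A
  | test : NodeExpr A → PathExpr A
  | comp : PathExpr A → PathExpr A → PathExpr A
  | union : PathExpr A → PathExpr A → PathExpr A

inductive NodeExpr (A : Type) : Type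
  | lab : A → NodeExpr A
  | neg : NodeExpr A → NodeExpr A
  | conj : NodeExpr A → NodeExpr A → NodeExpr A
  | diam : PathExpr A → NodeExpr A
  | eqTest : PathExpr A → PathExpr A → NodeExpr A
  | neqTest : PathExpr A → PathExpr A → NodeExpr A
end

namespace XPath

variable {A : Type}

/-- Defined disjunction `φ ∨ ψ := ¬(¬φ ∧ ¬ψ)`. -/
def nOr (φ ψ : NodeExpr A) : NodeExpr A := .neg (.conj (.neg φ) (.neg ψ))

/-- `⊤ := ⟨ε⟩`. -/
def topN : NodeExpr A := .diam .eps

/-- `⊥ := ¬⊤`. -/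
def botN : NodeExpr A := .neg topN

/-- `⊥̄ := [¬⟨ε⟩]`. -/
def botP : PathExpr A := .test (.neg (.diam .eps))

def bigOr (l : List (NodeExpr A)) : NodeExpr A := l.foldr nOr botN

def bigUnion (l : List (PathExpr A)) : PathExpr A := l.foldr PathExpr.union botP

/-- A data tree: a tree (connected, acyclic, unique parents except the root)
whose nodes carry labels from `A`, together with a partition of the nodes
(presented as an equivalence relation `eqd`). -/
structure DataTree (A : Type) where
  X : Type
  child : X → X → Prop
  root : X
  label : X → A
  eqd : X → X → Prop
  eqd_equiv : Equivalence eqd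
  parent_unique : ∀ ⦃x y z : X⦄, child x z → child y z → x = y
  root_no_parent : ∀ x : X, ¬ child x root
  reach : ∀ x : X, Relation.ReflTransGen child root x
  acyclic : ∀ x : X, ¬ Relation.TransGen child x x

mutual
/-- Semantics of path expressions. -/
def psem (T : DataTree A) : PathExpr A → T.X → T.X → Prop
  | .eps, x, y => x = y
  | .down, x, y => T.child x y
  | .test φ, x, y => x = y ∧ nsem T φ x
  | .comp α β, x, z => ∃ y, psem T α x y ∧ psem T β y z
  | .union α β, x, y => psem T α x y ∨ psem T β x y

/-- Semantics of node expressions. -/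
def nsem (T : DataTree A) : NodeExpr A → T.X → Prop
  | .lab a, x => T.label x = a
  | .neg φ, x => ¬ nsem T φ x
  | .conj φ ψ, x => nsem T φ x ∧ nsem T ψ x
  | .diam α, x => ∃ y, psem T α x y
  | .eqTest α β, x => ∃ y z, psem T α x y ∧ psem T β x z ∧ T.eqd y z
  | .neqTest α β, x => ∃ y z, psem T α x y ∧ psem T β x z ∧ ¬ T.eqd y z
end

/-- Semantic equivalence of node expressions: same denotation in every data tree. -/
def nodeValid (φ ψ : NodeExpr A) : Prop :=
  ∀ (T : DataTree A) (x : T.X), nsem T φ x ↔ nsem T ψ x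

/-- Semantic equivalence of path expressions: same denotation in every data tree. -/
def pathValid (α β : PathExpr A) : Prop :=
  ∀ (T : DataTree A) (x y : T.X), psem T α x y ↔ psem T β x y

mutual
/-- Derivability of node equivalences in the axiomatic system `XP`. -/
inductive NDer {A : Type} [Fintype A] : NodeExpr A → NodeExpr A → Prop
  | refl (φ : NodeExpr A) : NDer φ φ
  | symm {φ ψ : NodeExpr A} : NDer φ ψ → NDer ψ φ
  | trans {φ ψ ρ : NodeExpr A} : NDer φ ψ → NDer ψ ρ → NDer φ ρ
  | congr_neg {φ ψ : NodeExpr A} : NDer φ ψ → NDer (.neg φ) (.neg ψ)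
  | congr_conj {φ φ' ψ ψ' : NodeExpr A} :
      NDer φ φ' → NDer ψ ψ' → NDer (.conj φ ψ) (.conj φ' ψ')
  | congr_diam {α β : PathExpr A} : PDer α β → NDer (.diam α) (.diam β)
  | congr_eqTest {α α' β β' : PathExpr A} :
      PDer α α' → PDer β β' → NDer (.eqTest α β) (.eqTest α' β')
  | congr_neqTest {α α' β β' : PathExpr A} :
      PDer α α' → PDer β β' → NDer (.neqTest α β) (.neqTest α' β')
  | lbAx1 : NDer topN (bigOr ((Finset.univ : Finset A).toList.map NodeExpr.lab))
  | lbAx2 {a b : A} : a ≠ b → NDer botN (.conj (.lab a) (.lab b))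
  | ndAx1 (φ ψ : NodeExpr A) :
      NDer φ (nOr (.neg (nOr (.neg φ) ψ)) (.neg (nOr (.neg φ) (.neg ψ))))
  | ndAx2 (φ : NodeExpr A) : NDer (.diam (.test φ)) φ
  | ndAx3 (α β : PathExpr A) : NDer (.diam (.union α β)) (nOr (.diam α) (.diam β))
  | ndAx4 (α β : PathExpr A) : NDer (.diam (.comp α β)) (.diam (.comp α (.test (.diam β))))
  | eqAx1 (α β : PathExpr A) : NDer (.eqTest α β) (.eqTest β α)
  | eqAx2 (α β γ : PathExpr A) :
      NDer (.eqTest (.union α β) γ) (nOr (.eqTest α γ) (.eqTest β γ))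
  | eqAx3 (φ : NodeExpr A) (α β : PathExpr A) :
      NDer (.conj φ (.eqTest α β)) (.eqTest (.comp (.test φ) α) β)
  | eqAx4 (α β : PathExpr A) : NDer (nOr (.eqTest α β) (.diam α)) (.diam α)
  | eqAx5 (γ α β : PathExpr A) :
      NDer (nOr (.diam (.comp γ (.test (.eqTest α β)))) (.eqTest (.comp γ α) (.comp γ β)))
        (.eqTest (.comp γ α) (.comp γ β))
  | eqAx6 (α : PathExpr A) : NDer (.eqTest α α) (.diam α)
  | eqAx7 (α β : PathExpr A) :
      NDer (nOr (.conj (.eqTest α .eps) (.eqTest β .eps)) (.eqTest α β)) (.eqTest α β)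
  | eqAx8 (α β γ : PathExpr A) :
      NDer (nOr (.eqTest α (.comp β (.test (.eqTest .eps γ)))) (.eqTest α (.comp β γ)))
        (.eqTest α (.comp β γ))
  | neqAx1 (α β : PathExpr A) : NDer (.neqTest α β) (.neqTest β α)
  | neqAx2 (α β γ : PathExpr A) :
      NDer (.neqTest (.union α β) γ) (nOr (.neqTest α γ) (.neqTest β γ))
  | neqAx3 (φ : NodeExpr A) (α β : PathExpr A) :
      NDer (.conj φ (.neqTest α β)) (.neqTest (.comp (.test φ) α) β)
  | neqAx4 (α β : PathExpr A) : NDer (nOr (.neqTest α β) (.diam α)) (.diam α)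
  | neqAx5 (γ α β : PathExpr A) :
      NDer (nOr (.diam (.comp γ (.test (.neqTest α β)))) (.neqTest (.comp γ α) (.comp γ β)))
        (.neqTest (.comp γ α) (.comp γ β))
  | neqAx6 (α β γ η : PathExpr A) :
      NDer (nOr (.conj (.eqTest α γ) (.eqTest β η)) (nOr (.eqTest α β) (.neqTest γ η)))
        (nOr (.eqTest α β) (.neqTest γ η))
  | neqAx7 (α β γ η : PathExpr A) :
      NDer (nOr (.conj (.neqTest α γ) (.eqTest β η)) (nOr (.neqTest α β) (.neqTest γ η)))
        (nOr (.neqTest α β) (.neqTest γ η))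
  | neqAx8 (α β γ η : PathExpr A) :
      NDer (nOr (.eqTest γ (.comp η (.comp (.test (.conj (.neg (.eqTest α β)) (.diam α))) β)))
              (.neqTest γ (.comp η α)))
        (.neqTest γ (.comp η α))
  | neqAx9 (α β γ η : PathExpr A) :
      NDer (nOr (.neqTest γ (.comp η (.comp (.test (.conj (.neg (.neqTest α β)) (.diam α))) β)))
              (.neqTest γ (.comp η α)))
        (.neqTest γ (.comp η α))
  | neqAx10 (α β γ η : PathExpr A) :
      NDer (nOr (.eqTest γ (.comp η (.comp (.test (.conj (.neg (.neqTest α α)) (.eqTest α β))) α)))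
              (.eqTest γ (.comp η β)))
        (.eqTest γ (.comp η β))

/-- Derivability of path equivalences in the axiomatic system `XP`. -/
inductive PDer {A : Type} [Fintype A] : PathExpr A → PathExpr A → Prop
  | refl (α : PathExpr A) : PDer α α
  | symm {α β : PathExpr A} : PDer α β → PDer β α
  | trans {α β γ : PathExpr A} : PDer α β → PDer β γ → PDer α γ
  | congr_test {φ ψ : NodeExpr A} : NDer φ ψ → PDer (.test φ) (.test ψ)
  | congr_comp {α α' β β' : PathExpr A} :
      PDer α α' → PDer β β' → PDer (.comp α β) (.comp α' β')
  | congr_union {α α' β β' : PathExpr A} :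
      PDer α α' → PDer β β' → PDer (.union α β) (.union α' β')
  | prAx1 (α β : PathExpr A) : PDer (.comp (.comp α (.test (.neg (.diam β)))) β) botP
  | prAx2 : PDer (.test topN) (.eps : PathExpr A)
  | prAx3 (φ ψ : NodeExpr A) : PDer (.test (nOr φ ψ)) (.union (.test φ) (.test ψ))
  | isAx1 (α β γ : PathExpr A) : PDer (.union (.union α β) γ) (.union α (.union β γ))
  | isAx2 (α β : PathExpr A) : PDer (.union α β) (.union β α)
  | isAx3 (α : PathExpr A) : PDer (.union α α) α
  | isAx4 (α β γ : PathExpr A) : PDer (.comp α (.comp β γ)) (.comp (.comp α β) γ)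
  | isAx5l (α : PathExpr A) : PDer (.comp .eps α) α
  | isAx5r (α : PathExpr A) : PDer (.comp α .eps) α
  | isAx6l (α β γ : PathExpr A) :
      PDer (.comp α (.union β γ)) (.union (.comp α β) (.comp α γ))
  | isAx6r (α β γ : PathExpr A) :
      PDer (.comp (.union α β) γ) (.union (.comp α γ) (.comp β γ))
  | isAx7 (α : PathExpr A) : PDer (.union botP α) α
end

/-- A node expression is `XP`-consistent if it is not provably equivalent to `⊥`. -/
def NConsistent [Fintype A] (φ : NodeExpr A) : Prop := ¬ NDer φ botN

/-- A path expression is `XP`-consistent if it is not provably equivalent to `⊥̄`. -/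
def PConsistent [Fintype A] (α : PathExpr A) : Prop := ¬ PDer α botP

/-- The normal form `a ∧ ⋀_{d ∈ C} d ∧ ⋀_{d ∈ D∖C} ¬d`, built along the canonical listing `D`. -/
noncomputable def mkNF (a : A) (C D : List (NodeExpr A)) : NodeExpr A :=
  D.foldl (fun acc d => .conj acc (if d ∈ C then d else .neg d)) (.lab a)

/-- The canonical lists of normal-form path expressions (first component)
and normal-form node expressions (second component) at each level. -/
noncomputable def NF (A : Type) [Fintype A] : ℕ → List (PathExpr A) × List (NodeExpr A)
  | 0 =>
    ([.eps],
      (Finset.univ : Finset A).toList.map fun a =>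
        NodeExpr.conj (.conj (.lab a) (.eqTest .eps .eps)) (.neg (.neqTest .eps .eps)))
  | n+1 =>
    let P := (NF A n).1
    let N := (NF A n).2
    let P' : List (PathExpr A) :=
      .eps :: N.flatMap fun ψ => P.map fun β => PathExpr.comp .down (.comp (.test ψ) β)
    let D : List (NodeExpr A) :=
      (P'.flatMap fun α => P'.map fun β => NodeExpr.eqTest α β) ++
      (P'.flatMap fun α => P'.map fun β => NodeExpr.neqTest α β)
    let cands : List (NodeExpr A) :=
      D.sublists.flatMap fun C => (Finset.univ : Finset A).toList.map fun a => mkNF a C D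
    (P', cands.filter fun φ => decide (NConsistent φ))

/-- `Pₙ`: normal-form path expressions of level `n`. -/
noncomputable def Pnf (A : Type) [Fintype A] (n : ℕ) : Set (PathExpr A) :=
  {α | α ∈ (NF A n).1}

/-- `Nₙ`: normal-form node expressions of level `n`. -/
noncomputable def Nnf (A : Type) [Fintype A] (n : ℕ) : Set (NodeExpr A) :=
  {φ | φ ∈ (NF A n).2}

/-- `Dₙ`: data-aware diamonds between normal-form paths of level `n`. -/
noncomputable def Dnf (A : Type) [Fintype A] (n : ℕ) : Set (NodeExpr A) :=
  {φ | ∃ α ∈ Pnf A n, ∃ β ∈ Pnf A n, φ = NodeExpr.eqTest α β ∨ φ = NodeExpr.neqTest α β}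

/-- The conjuncts of a node expression (flattening `∧`). -/
def conjuncts : NodeExpr A → List (NodeExpr A)
  | .conj φ ψ => conjuncts φ ++ conjuncts ψ
  | φ => [φ]

/-- `δ` is a conjunct of `ψ`. -/
def IsConjunct (δ ψ : NodeExpr A) : Prop := δ ∈ conjuncts ψ

/-- Length of a path expression. -/
def plen : PathExpr A → ℕ
  | .eps => 0
  | .down => 1
  | .test _ => 0
  | .comp α β => plen α + plen β
  | .union α β => max (plen α) (plen β)

mutual
/-- Downward depth of a node expression. -/
def ndd : NodeExpr A → ℕ
  | .lab _ => 0
  | .neg φ => ndd φ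
  | .conj φ ψ => max (ndd φ) (ndd ψ)
  | .diam α => pdd α
  | .eqTest α β => max (pdd α) (pdd β)
  | .neqTest α β => max (pdd α) (pdd β)

/-- Downward depth of a path expression. -/
def pdd : PathExpr A → ℕ
  | .eps => 0
  | .down => 1
  | .test φ => ndd φ
  | .comp α β => max (max (pdd α) (pdd β)) (plen α + pdd β)
  | .union α β => max (pdd α) (pdd β)
end

/-- The path `↓[ψ₁]…↓[ψ_k]α`. -/
def prefixPath : List (NodeExpr A) → PathExpr A → PathExpr A
  | [], α => α
  | ψ :: l, α => .comp .down (.comp (.test ψ) (prefixPath l α))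

/-- The path `↓[ψ]α`. -/
def dPath (ψ : NodeExpr A) (α : PathExpr A) : PathExpr A :=
  .comp .down (.comp (.test ψ) α)

/-- A path expression whose leftmost symbol is `↓`. -/
def startsWithDown : PathExpr A → Prop
  | .down => True
  | .comp α _ => startsWithDown α
  | _ => False

/-- The subtree of `T` hanging from `x`, with the restricted partition. -/
def DataTree.restrict (T : DataTree A) (x : T.X) : DataTree A where
  X := {y : T.X // Relation.ReflTransGen T.child x y}
  child y z := T.child y.1 z.1
  root := ⟨x, Relation.ReflTransGen.refl⟩
  label y := T.label y.1
  eqd y z := T.eqd y.1 z.1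
  eqd_equiv :=
    ⟨fun y => T.eqd_equiv.refl y.1, fun h => T.eqd_equiv.symm h,
      fun h h' => T.eqd_equiv.trans h h'⟩
  parent_unique := by
    intro a b c hac hbc
    exact Subtype.ext (T.parent_unique hac hbc)
  root_no_parent := by
    intro y hy
    exact T.acyclic x (Relation.TransGen.tail' y.2 hy)
  reach := by
    rintro ⟨y, hy⟩
    induction hy with
    | refl => exact Relation.ReflTransGen.refl
    | @tail b c hxb hbc ih => exact Relation.ReflTransGen.tail (ih) hbc
  acyclic := by
    rintro y hy
    have key : ∀ a b : {y : T.X // Relation.ReflTransGen T.child x y},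
        Relation.TransGen (fun y z : {y : T.X // Relation.ReflTransGen T.child x y} =>
          T.child y.1 z.1) a b → Relation.TransGen T.child a.1 b.1 := by
      intro a b hab
      induction hab with
      | single h => exact Relation.TransGen.single h
      | tail _ h ih => exact Relation.TransGen.tail ih h
    exact T.acyclic y.1 (key y y hy)

end XPath

namespace XPath

section DerivedLemmas
variable {A : Type} [Fintype A]

theorem NDer.congr_nOr {φ φ' ψ ψ' : NodeExpr A} (h1 : NDer φ φ') (h2 : NDer ψ ψ') :
    NDer (nOr φ ψ) (nOr φ' ψ') :=
  NDer.congr_neg (NDer.congr_conj (NDer.congr_neg h1) (NDer.congr_neg h2))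

theorem nOr_diam (φ ψ : NodeExpr A) :
    NDer (nOr φ ψ) (.diam (.union (.test φ) (.test ψ))) :=
  ((NDer.ndAx2 (nOr φ ψ)).symm).trans (NDer.congr_diam (PDer.prAx3 φ ψ))

theorem nOr_comm (φ ψ : NodeExpr A) : NDer (nOr φ ψ) (nOr ψ φ) :=
  (nOr_diam φ ψ).trans ((NDer.congr_diam (PDer.isAx2 _ _)).trans (nOr_diam ψ φ).symm)

theorem nOr_idem (φ : NodeExpr A) : NDer (nOr φ φ) φ :=
  (nOr_diam φ φ).trans ((NDer.congr_diam (PDer.isAx3 _)).trans (NDer.ndAx2 φ))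

theorem nOr_bot (φ : NodeExpr A) : NDer (nOr botN φ) φ :=
  (nOr_diam botN φ).trans ((NDer.congr_diam (PDer.isAx7 _)).trans (NDer.ndAx2 φ))

theorem nOr_assoc (φ ψ ρ : NodeExpr A) : NDer (nOr (nOr φ ψ) ρ) (nOr φ (nOr ψ ρ)) := by
  have h1 : NDer (nOr (nOr φ ψ) ρ) (.diam (.union (.union (.test φ) (.test ψ)) (.test ρ))) :=
    (nOr_diam _ _).trans (NDer.congr_diam (PDer.congr_union (PDer.prAx3 φ ψ) (PDer.refl _)))
  have h2 : NDer (NodeExpr.diam (.union (.union (.test φ) (.test ψ)) (.test ρ)))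
      (.diam (.union (.test φ) (.union (.test ψ) (.test ρ)))) :=
    NDer.congr_diam (PDer.isAx1 _ _ _)
  have h3 : NDer (NodeExpr.diam (.union (.test φ) (.union (.test ψ) (.test ρ))))
      (nOr φ (nOr ψ ρ)) :=
    (NDer.ndAx3 _ _).trans (NDer.congr_nOr (NDer.ndAx2 φ)
      ((NDer.ndAx3 _ _).trans (NDer.congr_nOr (NDer.ndAx2 ψ) (NDer.ndAx2 ρ))))
  exact (h1.trans h2).trans h3

/-- Derived order on node expressions. -/
def NLe (φ ψ : NodeExpr A) : Prop := NDer (nOr φ ψ) ψ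

theorem NLe.of_der {φ ψ : NodeExpr A} (h : NDer φ ψ) : NLe φ ψ :=
  (NDer.congr_nOr h (NDer.refl ψ)).trans (nOr_idem ψ)

theorem NLe.refl (φ : NodeExpr A) : NLe φ φ := nOr_idem φ

theorem NLe.congr {φ φ' ψ ψ' : NodeExpr A} (h1 : NDer φ φ') (h2 : NDer ψ ψ')
    (h : NLe φ ψ) : NLe φ' ψ' := ((NDer.congr_nOr h1.symm h2.symm).trans h).trans h2

theorem NLe.trans {φ ψ ρ : NodeExpr A} (h1 : NLe φ ψ) (h2 : NLe ψ ρ) : NLe φ ρ := by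
  have h0 : NDer (nOr φ ρ) (nOr φ (nOr ψ ρ)) := NDer.congr_nOr (NDer.refl φ) h2.symm
  exact h0.trans (((nOr_assoc φ ψ ρ).symm.trans (NDer.congr_nOr h1 (NDer.refl ρ))).trans h2)

theorem NLe.trans_der {φ ψ ρ : NodeExpr A} (h1 : NLe φ ψ) (h2 : NDer ψ ρ) : NLe φ ρ :=
  h1.trans (NLe.of_der h2)

theorem NLe.antisymm {φ ψ : NodeExpr A} (h1 : NLe φ ψ) (h2 : NLe ψ φ) : NDer φ ψ :=
  (h2.symm.trans (nOr_comm ψ φ)).trans h1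

theorem nOr_le {a b c : NodeExpr A} (h1 : NLe a c) (h2 : NLe b c) : NLe (nOr a b) c :=
  ((nOr_assoc a b c).trans (NDer.congr_nOr (NDer.refl a) h2)).trans h1

theorem bot_le (φ : NodeExpr A) : NLe botN φ := nOr_bot φ

theorem eqTest_le_diam {α β : PathExpr A} : NLe (NodeExpr.eqTest α β) (.diam α) :=
  NDer.eqAx4 α β

theorem eqTest_test_self (φ : NodeExpr A) :
    NDer φ (NodeExpr.eqTest (.test φ) (.test φ)) :=
  ((NDer.ndAx2 φ).symm).trans (NDer.eqAx6 (.test φ)).symm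

theorem conj_le_right (a b : NodeExpr A) : NLe (NodeExpr.conj a b) b := by
  have h1 : NDer (NodeExpr.conj a b) (.eqTest (.comp (.test a) (.test b)) (.test b)) :=
    (NDer.congr_conj (NDer.refl a) (eqTest_test_self b)).trans (NDer.eqAx3 a (.test b) (.test b))
  exact NLe.congr (h1.trans (NDer.eqAx1 _ _)).symm (NDer.ndAx2 b) eqTest_le_diam

theorem eqTest_eps (φ : NodeExpr A) : NDer φ (NodeExpr.eqTest (.test φ) .eps) := by
  have habs : NDer (NodeExpr.conj φ (.eqTest .eps (.test φ))) φ :=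
    (NDer.eqAx3 φ .eps (.test φ)).trans
      ((NDer.congr_eqTest (PDer.isAx5r (.test φ)) (PDer.refl _)).trans
        ((NDer.eqAx6 (.test φ)).trans (NDer.ndAx2 φ)))
  have h1 : NLe φ (NodeExpr.eqTest .eps (.test φ)) :=
    NLe.congr habs (NDer.refl _) (conj_le_right φ _)
  have h2 : NLe (NodeExpr.eqTest .eps (.test φ)) φ :=
    NLe.congr (NDer.eqAx1 _ _) (NDer.ndAx2 φ) eqTest_le_diam
  exact (h1.antisymm h2).trans (NDer.eqAx1 _ _)

theorem conj_eqTest (P Q : NodeExpr A) :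
    NDer (NodeExpr.conj P Q) (.eqTest (.test P) (.test Q)) :=
  (NDer.congr_conj (NDer.refl P) ((eqTest_eps Q).trans (NDer.eqAx1 _ _))).trans
    ((NDer.eqAx3 P .eps (.test Q)).trans
      (NDer.congr_eqTest (PDer.isAx5r (.test P)) (PDer.refl _)))

theorem conj_comm (P Q : NodeExpr A) : NDer (NodeExpr.conj P Q) (.conj Q P) :=
  (conj_eqTest P Q).trans ((NDer.eqAx1 _ _).trans (conj_eqTest Q P).symm)

theorem conj_idem (P : NodeExpr A) : NDer (NodeExpr.conj P P) P :=
  (conj_eqTest P P).trans ((NDer.eqAx6 _).trans (NDer.ndAx2 P))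

theorem conj_le_left (a b : NodeExpr A) : NLe (NodeExpr.conj a b) a :=
  NLe.congr (conj_comm b a) (NDer.refl a) (conj_le_right b a)

theorem conj_nOr_distrib (P X Y : NodeExpr A) :
    NDer (NodeExpr.conj P (nOr X Y)) (nOr (.conj P X) (.conj P Y)) :=
  (conj_eqTest P (nOr X Y)).trans <|
  (NDer.congr_eqTest (PDer.refl _) (PDer.prAx3 X Y)).trans <|
  (NDer.eqAx1 _ _).trans <|
  (NDer.eqAx2 (.test X) (.test Y) (.test P)).trans <|
  NDer.congr_nOr ((NDer.eqAx1 _ _).trans (conj_eqTest P X).symm)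
    ((NDer.eqAx1 _ _).trans (conj_eqTest P Y).symm)

theorem conj_mono_right {X Y : NodeExpr A} (P : NodeExpr A) (h : NLe X Y) :
    NLe (NodeExpr.conj P X) (.conj P Y) :=
  (conj_nOr_distrib P X Y).symm.trans (NDer.congr_conj (NDer.refl P) h)

theorem conj_mono_left {X Y : NodeExpr A} (P : NodeExpr A) (h : NLe X Y) :
    NLe (NodeExpr.conj X P) (.conj Y P) :=
  NLe.congr (conj_comm P X) (conj_comm P Y) (conj_mono_right P h)

theorem le_conj {c a b : NodeExpr A} (h1 : NLe c a) (h2 : NLe c b) :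
    NLe c (NodeExpr.conj a b) :=
  NLe.congr (conj_idem c) (NDer.refl _) ((conj_mono_left c h1).trans (conj_mono_right a h2))

theorem conj_absorb {a b : NodeExpr A} (h : NLe a b) : NDer a (NodeExpr.conj a b) :=
  (le_conj (NLe.refl a) h).antisymm (conj_le_left a b)

theorem conj_diam_comp (P Q : NodeExpr A) :
    NDer (NodeExpr.conj P Q) (.diam (.comp (.test P) (.test Q))) := by
  have hle : NLe (NodeExpr.conj P Q) (.diam (.comp (.test P) (.test Q))) := by
    have h1 : NDer (NodeExpr.conj P Q) (.eqTest (.comp (.test P) (.test Q)) .eps) :=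
      (NDer.congr_conj (NDer.refl P) (eqTest_eps Q)).trans (NDer.eqAx3 P (.test Q) .eps)
    exact NLe.congr h1.symm (NDer.refl _) eqTest_le_diam
  have hge : NLe (NodeExpr.diam (.comp (.test P) (.test Q))) (.conj P Q) := by
    have h1 : NDer (NodeExpr.diam (.comp (.test P) (.test Q)))
        (.conj P (.eqTest (.test Q) (.comp (.test P) (.test Q)))) :=
      (NDer.eqAx6 _).symm.trans (NDer.eqAx3 P (.test Q) (.comp (.test P) (.test Q))).symm
    have h2 : NLe (NodeExpr.eqTest (.test Q) (.comp (.test P) (.test Q))) Q :=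
      NLe.congr (NDer.refl _) (NDer.ndAx2 Q) eqTest_le_diam
    exact NLe.congr h1.symm (NDer.refl _) (conj_mono_right P h2)
  exact hle.antisymm hge

theorem lnc (φ : NodeExpr A) : NDer (NodeExpr.conj (.neg φ) φ) botN := by
  have h0 : NDer (NodeExpr.conj (.neg φ) φ)
      (.conj (.neg (.diam (.test φ))) (.diam (.test φ))) :=
    NDer.congr_conj (NDer.congr_neg (NDer.ndAx2 φ).symm) (NDer.ndAx2 φ).symm
  have h1 : NDer (NodeExpr.conj (.neg (.diam (.test φ))) (.diam (.test φ)))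
      (.diam (.comp (.test (.neg (.diam (.test φ)))) (.test (.diam (.test φ))))) :=
    conj_diam_comp _ _
  have h2 : NDer (NodeExpr.diam (.comp (.test (.neg (.diam (.test φ)))) (.test φ)))
      (.diam (.comp (.test (.neg (.diam (.test φ)))) (.test (.diam (.test φ))))) :=
    NDer.ndAx4 _ _
  have h3 : PDer (PathExpr.comp (.test (.neg (.diam (.test φ)))) (.test φ)) botP :=
    (PDer.congr_comp (PDer.isAx5l _).symm (PDer.refl _)).trans (PDer.prAx1 .eps (.test φ))
  exact ((h0.trans h1).trans h2.symm).trans ((NDer.congr_diam h3).trans (NDer.ndAx2 botN))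

end DerivedLemmas

end XPath
namespace XPath

section KeyLemmas
variable {A : Type} [Fintype A]

theorem down_psi_le (ψ : NodeExpr A) (α : PathExpr A)
    (hent : NLe ψ (NodeExpr.eqTest α α)) :
    NLe (NodeExpr.diam (.comp .down (.test ψ))) (.eqTest (dPath ψ α) (dPath ψ α)) := by
  have h1 : NDer ψ (.diam (.comp (.test ψ) (.test (.eqTest α α)))) :=
    (conj_absorb hent).trans (conj_diam_comp ψ _)
  have h2 : NDer (NodeExpr.diam (.comp .down (.test ψ)))
      (.diam (.comp .down (.test (.diam (.comp (.test ψ) (.test (.eqTest α α))))))) :=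
    NDer.congr_diam (PDer.congr_comp (PDer.refl _) (PDer.congr_test h1))
  have h3 : NDer (NodeExpr.diam (.comp .down (.comp (.test ψ) (.test (.eqTest α α)))))
      (.diam (.comp .down (.test (.diam (.comp (.test ψ) (.test (.eqTest α α))))))) :=
    NDer.ndAx4 .down _
  have h4 : NDer (NodeExpr.diam (.comp .down (.comp (.test ψ) (.test (.eqTest α α)))))
      (.diam (.comp (.comp .down (.test ψ)) (.test (.eqTest α α)))) :=
    NDer.congr_diam (PDer.isAx4 _ _ _)
  have h5 : NLe (NodeExpr.diam (.comp (.comp .down (.test ψ)) (.test (.eqTest α α))))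
      (.eqTest (.comp (.comp .down (.test ψ)) α) (.comp (.comp .down (.test ψ)) α)) :=
    NDer.eqAx5 _ α α
  have h6 : NDer (NodeExpr.eqTest (.comp (.comp .down (.test ψ)) α)
      (.comp (.comp .down (.test ψ)) α)) (.eqTest (dPath ψ α) (dPath ψ α)) :=
    NDer.congr_eqTest (PDer.isAx4 _ _ _).symm (PDer.isAx4 _ _ _).symm
  exact NLe.congr ((h2.trans h3.symm).trans h4).symm h6 h5

theorem key_incons (ψ : NodeExpr A) (α γ : PathExpr A)
    (hent : NLe ψ (NodeExpr.eqTest α α)) :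
    NDer (NodeExpr.conj (.conj (.conj
        (.neg (.eqTest γ (dPath ψ α))) (.neg (.neqTest γ (dPath ψ α))))
        (.diam γ)) (.diam (.comp .down (.test ψ)))) botN := by
  set d := dPath ψ α with hd
  set E := NodeExpr.eqTest γ d with hE
  set N := NodeExpr.neqTest γ d with hN
  set χ := NodeExpr.conj (.conj (.conj (.neg E) (.neg N)) (.diam γ))
      (.diam (.comp .down (.test ψ))) with hχ
  have c0 : NLe χ (.conj (.conj (.neg E) (.neg N)) (.diam γ)) := conj_le_left _ _
  have c1 : NLe χ (.neg E) := c0.trans ((conj_le_left _ _).trans (conj_le_left _ _))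
  have c2 : NLe χ (.neg N) := c0.trans ((conj_le_left _ _).trans (conj_le_right _ _))
  have c3 : NLe χ (.diam γ) := c0.trans (conj_le_right _ _)
  have c4 : NLe χ (.diam (.comp .down (.test ψ))) := conj_le_right _ _
  have g1 : NLe χ (.eqTest γ γ) := c3.trans_der (NDer.eqAx6 γ).symm
  have g2 : NLe χ (.eqTest d d) := c4.trans (down_psi_le ψ α hent)
  have g4 : NLe (NodeExpr.conj (.eqTest γ γ) (.eqTest d d)) (nOr E N) :=
    NDer.neqAx6 γ d γ d
  have g5 : NLe χ (nOr E N) := (le_conj g1 g2).trans g4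
  have g7 : NLe (NodeExpr.conj (.neg N) (nOr E N)) E := by
    have hdist : NDer (NodeExpr.conj (.neg N) (nOr E N))
        (nOr (.conj (.neg N) E) (.conj (.neg N) N)) := conj_nOr_distrib _ _ _
    have h : NLe (nOr (NodeExpr.conj (.neg N) E) (.conj (.neg N) N)) E :=
      nOr_le (conj_le_right _ _) ((NLe.of_der (lnc N)).trans (bot_le E))
    exact (NLe.of_der hdist).trans h
  have g8 : NLe χ E := (le_conj c2 g5).trans g7
  have g9 : NLe χ botN := (le_conj c1 g8).trans_der (lnc E)
  exact g9.antisymm (bot_le _)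

end KeyLemmas

end XPath
namespace XPath

section StructLemmas
variable {A : Type} [Fintype A]

theorem conjuncts_conj (φ ψ : NodeExpr A) :
    conjuncts (NodeExpr.conj φ ψ) = conjuncts φ ++ conjuncts ψ := rfl

theorem le_of_isConjunct : ∀ (ρ δ : NodeExpr A), δ ∈ conjuncts ρ → NLe ρ δ
  | .conj φ ψ, δ, h => by
      rcases List.mem_append.mp (by rw [conjuncts_conj] at h; exact h) with h' | h'
      · exact (conj_le_left φ ψ).trans (le_of_isConjunct φ δ h')
      · exact (conj_le_right φ ψ).trans (le_of_isConjunct ψ δ h')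
  | .lab a, δ, h => by
      simp only [conjuncts, List.mem_singleton] at h; exact h ▸ NLe.refl _
  | .neg φ, δ, h => by
      simp only [conjuncts, List.mem_singleton] at h; exact h ▸ NLe.refl _
  | .diam α, δ, h => by
      simp only [conjuncts, List.mem_singleton] at h; exact h ▸ NLe.refl _
  | .eqTest α β, δ, h => by
      simp only [conjuncts, List.mem_singleton] at h; exact h ▸ NLe.refl _
  | .neqTest α β, δ, h => by
      simp only [conjuncts, List.mem_singleton] at h; exact h ▸ NLe.refl _

theorem conjuncts_foldl_sub (g : NodeExpr A → NodeExpr A) (l : List (NodeExpr A)) :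
    ∀ acc : NodeExpr A, ∀ x ∈ conjuncts acc,
      x ∈ conjuncts (l.foldl (fun acc d => .conj acc (g d)) acc) := by
  induction l with
  | nil => intro acc x hx; exact hx
  | cons d l ih =>
      intro acc x hx
      exact ih _ x (by rw [conjuncts_conj]; exact List.mem_append.mpr (Or.inl hx))

theorem mem_conjuncts_foldl (g : NodeExpr A → NodeExpr A) {l : List (NodeExpr A)}
    {d : NodeExpr A} (hd : d ∈ l) (x : NodeExpr A) (hx : x ∈ conjuncts (g d)) :
    ∀ acc : NodeExpr A, x ∈ conjuncts (l.foldl (fun acc d => .conj acc (g d)) acc) := by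
  induction l with
  | nil => cases hd
  | cons e l ih =>
      intro acc
      rcases List.mem_cons.mp hd with rfl | hd'
      · exact conjuncts_foldl_sub g l _ x
          (by rw [conjuncts_conj]; exact List.mem_append.mpr (Or.inr hx))
      · exact ih hd' (.conj acc (g e))

end StructLemmas

end XPath
namespace XPath

section FinalLemmas
variable {A : Type} [Fintype A]

theorem mkNF_dichotomy (a : A) (C D : List (NodeExpr A)) {α : PathExpr A}
    (hD : NodeExpr.eqTest α α ∈ D) :
    IsConjunct (NodeExpr.eqTest α α) (mkNF a C D) ∨
      IsConjunct (NodeExpr.neg (.eqTest α α)) (mkNF a C D) := by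
  by_cases hmem : NodeExpr.eqTest α α ∈ C
  · left
    exact mem_conjuncts_foldl (fun d => if d ∈ C then d else .neg d) hD _
      (by simp [hmem, conjuncts]) (.lab a)
  · right
    exact mem_conjuncts_foldl (fun d => if d ∈ C then d else .neg d) hD _
      (by simp [hmem, conjuncts]) (.lab a)

theorem nnf_zero {ψ : NodeExpr A} (hψ : ψ ∈ Nnf A 0) {α : PathExpr A}
    (hα : α ∈ Pnf A 0) : IsConjunct (NodeExpr.eqTest α α) ψ := by
  have hψ' : ψ ∈ (NF A 0).2 := hψ
  have hα' : α ∈ (NF A 0).1 := hα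
  simp only [NF, List.mem_map, List.mem_singleton] at hψ' hα'
  obtain ⟨a, -, rfl⟩ := hψ'
  subst hα'
  simp [IsConjunct, conjuncts]

theorem nnf_cases {m : ℕ} {ψ : NodeExpr A} (hψ : ψ ∈ Nnf A (m + 1))
    {α : PathExpr A} (hα : α ∈ Pnf A (m + 1)) :
    IsConjunct (NodeExpr.eqTest α α) ψ ∨ IsConjunct (NodeExpr.neg (.eqTest α α)) ψ := by
  have hψ' : ψ ∈ (NF A (m + 1)).2 := hψ
  have hα' : α ∈ (NF A (m + 1)).1 := hα
  simp only [NF] at hψ' hα'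
  rw [List.mem_filter] at hψ'
  obtain ⟨hc, -⟩ := hψ'
  rw [List.mem_flatMap] at hc
  obtain ⟨C, hCmem, hm⟩ := hc
  rw [List.mem_map] at hm
  obtain ⟨a, -, rfl⟩ := hm
  refine mkNF_dichotomy a C _ ?_
  exact List.mem_append.mpr (Or.inl (List.mem_flatMap.mpr
    ⟨α, hα', List.mem_map.mpr ⟨α, hα', rfl⟩⟩))

end FinalLemmas

end XPath
/-- If `¬⟨γ = ↓[ψ]α⟩ ∧ ¬⟨γ ≠ ↓[ψ]α⟩ ∧ ⟨γ⟩ ∧ ⟨↓[ψ]⟩` is `XP`-consistent, then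
`¬⟨α = α⟩` is a conjunct of `ψ`. -/
theorem XPath.lemma5 {A : Type} [Fintype A] (hA : 1 < Fintype.card A)
    (n : ℕ) (ψ : NodeExpr A) (hψ : ψ ∈ Nnf A n)
    (α : PathExpr A) (hα : α ∈ Pnf A n)
    (γ : PathExpr A) (hγ : γ ∈ Pnf A (n + 1))
    (hcons : NConsistent (NodeExpr.conj (.conj (.conj
        (.neg (.eqTest γ (dPath ψ α))) (.neg (.neqTest γ (dPath ψ α))))
        (.diam γ)) (.diam (.comp .down (.test ψ))))) :
    IsConjunct (.neg (.eqTest α α)) ψ := by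
  cases n with
  | zero =>
      have h1 : IsConjunct (NodeExpr.eqTest α α) ψ := nnf_zero hψ hα
      exact absurd (key_incons ψ α γ (le_of_isConjunct ψ _ h1)) hcons
  | succ m =>
      rcases nnf_cases hψ hα with h1 | h1
      · exact absurd (key_incons ψ α γ (le_of_isConjunct ψ _ h1)) hcons
      · exact h1
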